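/- The spiral-arc holonomy is asymptotically almost periodic in c: fix t ∈ ℝ and regard 𝔞 and 𝔟 as functions of c (writing 𝔞(c,t), 𝔟(c,t), with Δ(c) := √(λ²/4 + c² − νλc)). Then as c → +∞, 𝔞(c,t) − e^{iλt/2}( cos((c − νλ/2)t) + iν sin((c − νλ/2)t) ) → 0 and 𝔟(c,t) − iμ e^{iλt/2} sin((c − νλ/2)t) → 0; the subtracted functions are periodic in c. -/

import Mathlib

open Filter Real

private lemma sin_lip (a b : ℝ) : |Real.sin a - Real.sin b| ≤ |a - b| := by
  rw [Real.sin_sub_sin, abs_mul, abs_mul, abs_two]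
  have h1 := Real.abs_sin_le_abs (x := (a - b) / 2)
  have h2 := Real.abs_cos_le_one ((a + b) / 2)
  have h3 : |(a - b) / 2| = |a - b| / 2 := by
    rw [abs_div, abs_two]
  have h4 := abs_nonneg (Real.sin ((a - b) / 2))
  nlinarith [abs_nonneg (a - b), abs_nonneg (Real.cos ((a + b) / 2))]

private lemma cos_lip (a b : ℝ) : |Real.cos a - Real.cos b| ≤ |a - b| := by
  rw [Real.cos_sub_cos, abs_mul, abs_mul, abs_neg, abs_two]
  have h1 := Real.abs_sin_le_abs (x := (a - b) / 2)
  have h2 := Real.abs_sin_le_one ((a + b) / 2)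
  have h3 : |(a - b) / 2| = |a - b| / 2 := by
    rw [abs_div, abs_two]
  have h4 := abs_nonneg (Real.sin ((a - b) / 2))
  nlinarith [abs_nonneg (a - b), abs_nonneg (Real.sin ((a + b) / 2))]

/-- The spiral-arc holonomy is asymptotically almost periodic in the connection parameter `c`:
as `c → +∞`, `𝔞(c,t)` and `𝔟(c,t)` approach the functions
`e^{iλt/2}(cos((c − νλ/2)t) + iν sin((c − νλ/2)t))` and `iμ e^{iλt/2} sin((c − νλ/2)t)`,
which are periodic in `c` (with period `2π/t` when `t ≠ 0`). -/
theorem spiral_holonomy_asymptotically_periodic (lam ν : ℝ) (μ : ℂ)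
    (hnorm : ν ^ 2 + ‖μ‖ ^ 2 = 1) (t : ℝ)
    (Δ : ℝ → ℝ) (hΔ : ∀ c : ℝ, Δ c = Real.sqrt (lam ^ 2 / 4 + c ^ 2 - ν * lam * c))
    (𝔞 𝔟 : ℝ → ℂ)
    (ha : ∀ c : ℝ, 𝔞 c = Complex.exp (Complex.I * lam * t / 2) *
        ((Real.cos (Δ c * t) : ℂ) +
          Complex.I * (2 * ν * c - lam : ℝ) / (2 * Δ c : ℝ) * (Real.sin (Δ c * t) : ℂ)))
    (hb : ∀ c : ℝ, 𝔟 c = μ * Complex.exp (Complex.I * lam * t / 2) *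
        (Complex.I * c / (Δ c : ℝ)) * (Real.sin (Δ c * t) : ℂ)) :
    Filter.Tendsto (fun c : ℝ => 𝔞 c - Complex.exp (Complex.I * lam * t / 2) *
        ((Real.cos ((c - ν * lam / 2) * t) : ℂ) +
          Complex.I * (ν : ℝ) * (Real.sin ((c - ν * lam / 2) * t) : ℂ)))
      Filter.atTop (nhds 0) ∧
    Filter.Tendsto (fun c : ℝ => 𝔟 c - Complex.I * μ * Complex.exp (Complex.I * lam * t / 2) *
        (Real.sin ((c - ν * lam / 2) * t) : ℂ))
      Filter.atTop (nhds 0) ∧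
    (t ≠ 0 →
      Function.Periodic (fun c : ℝ => Complex.exp (Complex.I * lam * t / 2) *
        ((Real.cos ((c - ν * lam / 2) * t) : ℂ) +
          Complex.I * (ν : ℝ) * (Real.sin ((c - ν * lam / 2) * t) : ℂ))) (2 * Real.pi / t) ∧
      Function.Periodic (fun c : ℝ => Complex.I * μ * Complex.exp (Complex.I * lam * t / 2) *
        (Real.sin ((c - ν * lam / 2) * t) : ℂ)) (2 * Real.pi / t)) := by
  have hν2 : ν ^ 2 ≤ 1 := by nlinarith [sq_nonneg ‖μ‖]
  set K : ℝ := lam ^ 2 * (1 - ν ^ 2) / 4 with hKdef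
  have hK0 : 0 ≤ K := by
    have : 0 ≤ 1 - ν ^ 2 := by linarith
    positivity
  set θ : ℝ → ℝ := fun c => c - ν * lam / 2 with hθdef
  have hθc : ∀ c : ℝ, θ c = c - ν * lam / 2 := fun c => rfl
  have hΔeq : ∀ c, Δ c = Real.sqrt ((θ c) ^ 2 + K) := by
    intro c; rw [hΔ c]; congr 1; rw [hθc, hKdef]; ring
  have hθtop : Tendsto θ atTop atTop := by
    apply tendsto_atTop_atTop.mpr
    intro b
    exact ⟨b + ν * lam / 2, fun a haa => by rw [hθc]; linarith⟩
  have hθΔ : ∀ c, 0 ≤ θ c → θ c ≤ Δ c := by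
    intro c hc
    rw [hΔeq c]
    calc θ c = Real.sqrt ((θ c) ^ 2) := by rw [Real.sqrt_sq hc]
      _ ≤ Real.sqrt ((θ c) ^ 2 + K) := Real.sqrt_le_sqrt (by linarith)
  have hΔtop : Tendsto Δ atTop atTop := by
    apply tendsto_atTop_mono' atTop ?_ hθtop
    filter_upwards [hθtop.eventually_ge_atTop 0] with c hc using hθΔ c hc
  -- Δ - θ → 0
  have hdiff : Tendsto (fun c => Δ c - θ c) atTop (nhds 0) := by
    have hub : ∀ᶠ c in atTop, Δ c - θ c ≤ K / (2 * θ c) := by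
      filter_upwards [hθtop.eventually_ge_atTop 1] with c hc
      have hθpos : 0 < θ c := by linarith
      have hunn : 0 ≤ K / (2 * θ c) := by positivity
      have hle : (θ c) ^ 2 + K ≤ (θ c + K / (2 * θ c)) ^ 2 := by
        have h2 : 2 * θ c * (K / (2 * θ c)) = K := by
          field_simp
        nlinarith [sq_nonneg (K / (2 * θ c))]
      have : Δ c ≤ θ c + K / (2 * θ c) := by
        rw [hΔeq c]
        calc Real.sqrt ((θ c) ^ 2 + K) ≤ Real.sqrt ((θ c + K / (2 * θ c)) ^ 2) :=
              Real.sqrt_le_sqrt hle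
          _ = θ c + K / (2 * θ c) := Real.sqrt_sq (add_nonneg hθpos.le hunn)
      linarith
    have hlb : ∀ᶠ c in atTop, (0 : ℝ) ≤ Δ c - θ c := by
      filter_upwards [hθtop.eventually_ge_atTop 0] with c hc
      have := hθΔ c hc; linarith
    have hKto : Tendsto (fun c => K / (2 * θ c)) atTop (nhds 0) :=
      Filter.Tendsto.div_atTop tendsto_const_nhds (hθtop.const_mul_atTop two_pos)
    exact tendsto_of_tendsto_of_tendsto_of_le_of_le' tendsto_const_nhds hKto hlb hub
  -- sin and cos differences → 0
  have habs : Tendsto (fun c => |Δ c - θ c| * |t|) atTop (nhds 0) := by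
    have := (hdiff.abs).mul_const |t|
    simpa using this
  have hsd : Tendsto (fun c => Real.sin (Δ c * t) - Real.sin (θ c * t)) atTop (nhds 0) := by
    apply squeeze_zero_norm (a := fun c => |Δ c - θ c| * |t|) ?_ habs
    intro c
    calc ‖Real.sin (Δ c * t) - Real.sin (θ c * t)‖
        = |Real.sin (Δ c * t) - Real.sin (θ c * t)| := Real.norm_eq_abs _
      _ ≤ |Δ c * t - θ c * t| := sin_lip _ _
      _ = |Δ c - θ c| * |t| := by rw [← sub_mul, abs_mul]
  have hcd : Tendsto (fun c => Real.cos (Δ c * t) - Real.cos (θ c * t)) atTop (nhds 0) := by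
    apply squeeze_zero_norm (a := fun c => |Δ c - θ c| * |t|) ?_ habs
    intro c
    calc ‖Real.cos (Δ c * t) - Real.cos (θ c * t)‖
        = |Real.cos (Δ c * t) - Real.cos (θ c * t)| := Real.norm_eq_abs _
      _ ≤ |Δ c * t - θ c * t| := cos_lip _ _
      _ = |Δ c - θ c| * |t| := by rw [← sub_mul, abs_mul]
  -- coefficient convergence
  have hcoef : Tendsto (fun c => (2 * ν * c - lam) / (2 * Δ c) - ν) atTop (nhds 0) := by
    have heq : ∀ᶠ c in atTop,
        (2 * ν * (θ c - Δ c) + (ν ^ 2 - 1) * lam) / (2 * Δ c)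
          = (2 * ν * c - lam) / (2 * Δ c) - ν := by
      filter_upwards [hΔtop.eventually_gt_atTop 0] with c hc
      rw [hθc]
      field_simp
      ring
    have hnum : Tendsto (fun c => 2 * ν * (θ c - Δ c) + (ν ^ 2 - 1) * lam) atTop
        (nhds ((ν ^ 2 - 1) * lam)) := by
      have h1 : Tendsto (fun c => θ c - Δ c) atTop (nhds 0) := by
        have := hdiff.neg; simpa [neg_sub] using this
      have := (h1.const_mul (2 * ν)).add_const ((ν ^ 2 - 1) * lam)
      simpa using this
    have := Filter.Tendsto.div_atTop hnum (hΔtop.const_mul_atTop two_pos)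
    exact this.congr' heq
  have hcinv : Tendsto (fun c => c / Δ c - 1) atTop (nhds 0) := by
    have heq : ∀ᶠ c in atTop,
        ((θ c - Δ c) + ν * lam / 2) / Δ c = c / Δ c - 1 := by
      filter_upwards [hΔtop.eventually_gt_atTop 0] with c hc
      rw [hθc]
      field_simp
      ring
    have hnum : Tendsto (fun c => (θ c - Δ c) + ν * lam / 2) atTop (nhds (ν * lam / 2)) := by
      have h1 : Tendsto (fun c => θ c - Δ c) atTop (nhds 0) := by
        have := hdiff.neg; simpa [neg_sub] using this
      have := h1.add_const (ν * lam / 2)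
      simpa using this
    have := Filter.Tendsto.div_atTop hnum hΔtop
    exact this.congr' heq
  -- the two real remainder terms
  have hr2 : Tendsto (fun c => (2 * ν * c - lam) / (2 * Δ c) * Real.sin (Δ c * t)
      - ν * Real.sin (θ c * t)) atTop (nhds 0) := by
    have h1 : Tendsto (fun c => ((2 * ν * c - lam) / (2 * Δ c) - ν) * Real.sin (Δ c * t))
        atTop (nhds 0) := by
      apply squeeze_zero_norm (a := fun c => |(2 * ν * c - lam) / (2 * Δ c) - ν|) ?_
        (by simpa using hcoef.abs)
      intro c
      rw [Real.norm_eq_abs, abs_mul]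
      have h2 := Real.abs_sin_le_one (Δ c * t)
      have := abs_nonneg ((2 * ν * c - lam) / (2 * Δ c) - ν)
      nlinarith
    have h2 : Tendsto (fun c => ν * (Real.sin (Δ c * t) - Real.sin (θ c * t))) atTop (nhds 0) := by
      have := hsd.const_mul ν; simpa using this
    have h3 := h1.add h2
    rw [add_zero] at h3
    exact h3.congr (fun c => by ring)
  have hr3 : Tendsto (fun c => c / Δ c * Real.sin (Δ c * t) - Real.sin (θ c * t))
      atTop (nhds 0) := by
    have h1 : Tendsto (fun c => (c / Δ c - 1) * Real.sin (Δ c * t)) atTop (nhds 0) := by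
      apply squeeze_zero_norm (a := fun c => |c / Δ c - 1|) ?_ (by simpa using hcinv.abs)
      intro c
      rw [Real.norm_eq_abs, abs_mul]
      have h2 := Real.abs_sin_le_one (Δ c * t)
      have := abs_nonneg (c / Δ c - 1)
      nlinarith
    have h3 := h1.add hsd
    rw [add_zero] at h3
    exact h3.congr (fun c => by ring)
  set E : ℂ := Complex.exp (Complex.I * lam * t / 2) with hEdef
  refine ⟨?_, ?_, ?_⟩
  · -- 𝔞
    have key : ∀ c : ℝ, 𝔞 c - E * ((Real.cos (θ c * t) : ℂ) +
        Complex.I * (ν : ℝ) * (Real.sin (θ c * t) : ℂ))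
        = E * (((Real.cos (Δ c * t) - Real.cos (θ c * t) : ℝ) : ℂ)
          + Complex.I * (((2 * ν * c - lam) / (2 * Δ c) * Real.sin (Δ c * t)
            - ν * Real.sin (θ c * t) : ℝ) : ℂ)) := by
      intro c
      rw [ha c]
      push_cast
      ring
    have t1 : Tendsto (fun c => ((Real.cos (Δ c * t) - Real.cos (θ c * t) : ℝ) : ℂ))
        atTop (nhds 0) := by
      exact (Complex.continuous_ofReal.tendsto 0).comp hcd
    have t2 : Tendsto (fun c => Complex.I * (((2 * ν * c - lam) / (2 * Δ c) * Real.sin (Δ c * t)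
        - ν * Real.sin (θ c * t) : ℝ) : ℂ)) atTop (nhds 0) := by
      have h0 := (Complex.continuous_ofReal.tendsto 0).comp hr2
      have h1 := h0.const_mul Complex.I
      simp only [Complex.ofReal_zero, mul_zero] at h1
      exact h1
    have hsum := (t1.add t2).const_mul E
    rw [add_zero, mul_zero] at hsum
    exact hsum.congr (fun c => (key c).symm)
  · -- 𝔟
    have key : ∀ c : ℝ, 𝔟 c - Complex.I * μ * E * (Real.sin (θ c * t) : ℂ)
        = Complex.I * μ * E * (((c / Δ c * Real.sin (Δ c * t)
            - Real.sin (θ c * t) : ℝ) : ℂ)) := by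
      intro c
      rw [hb c]
      push_cast
      ring
    have t1 : Tendsto (fun c => ((c / Δ c * Real.sin (Δ c * t)
        - Real.sin (θ c * t) : ℝ) : ℂ)) atTop (nhds 0) := by
      exact (Complex.continuous_ofReal.tendsto 0).comp hr3
    have hsum := t1.const_mul (Complex.I * μ * E)
    rw [mul_zero] at hsum
    exact hsum.congr (fun c => (key c).symm)
  · -- periodicity
    intro ht
    have harg : ∀ c : ℝ, (c + 2 * Real.pi / t - ν * lam / 2) * t
        = (c - ν * lam / 2) * t + 2 * Real.pi := by
      intro c; field_simp; ring
    constructor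
    · intro c
      simp only
      rw [harg, Real.cos_add_two_pi, Real.sin_add_two_pi]
    · intro c
      simp only
      rw [harg, Real.sin_add_two_pi]
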